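/- Under the change-point model, for every integer k with 1 ≤ k ≤ L°(θ), the expectation of the lag-k Rice statistic equals E[S_k] = 2nσ² + k·(V(θ) − 2σ²). -/

import Mathlib

open MeasureTheory ProbabilityTheory Finset

/-- The minimal length of a maximal run of consecutive indices within `{1, …, n}`
(read linearly, without wrapping around) on which `θ` is constant. -/
noncomputable def linMinSeg (n : ℕ) (θ : ℤ → ℝ) : ℕ :=
  sInf {d : ℕ | 0 < d ∧ ∃ i : ℕ, i + d ≤ n ∧
    (i = 0 ∨ θ i ≠ θ (i + 1)) ∧
    (i + d = n ∨ θ (i + d) ≠ θ (i + d + 1)) ∧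
    ∀ e : ℕ, 0 < e → e < d → θ (i + e) = θ (i + e + 1)}

/-- The lag-`k` Rice statistic `S_k = ∑_{i=1}^{n-k} (X_i - X_{i+k})²`, `X_i = θ_i + ε_i`. -/
def Sstat (n : ℕ) (θ : ℤ → ℝ) {Ω : Type*} (ε : ℤ → Ω → ℝ) (k : ℕ) (ω : Ω) : ℝ :=
  ∑ i ∈ Finset.range (n - k),
    ((θ (i + 1) + ε (i + 1) ω) - (θ (i + 1 + k) + ε (i + 1 + k) ω)) ^ 2

lemma jump_ge (n k : ℕ) (θ : ℤ → ℝ) (hkL : k ≤ linMinSeg n θ) :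
    ∀ i j : ℕ, i < j → j + 1 ≤ n → (i = 0 ∨ θ i ≠ θ (i + 1)) → θ j ≠ θ (j + 1) →
      i + k ≤ j := by
  classical
  intro i j hij hjn hi hj
  set Pp : ℕ → Prop := fun m => m = 0 ∨ θ m ≠ θ (m + 1) with hPp
  have hdec : DecidablePred Pp := fun _ => Classical.dec _
  set i' := Nat.findGreatest Pp (j - 1) with hi'def
  have hii' : i ≤ i' := Nat.le_findGreatest (by omega) hi
  have hi'le : i' ≤ j - 1 := Nat.findGreatest_le _
  have hPi' : Pp i' := by
    rcases Nat.eq_zero_or_pos i' with h0 | h0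
    · left; exact h0
    · exact Nat.findGreatest_spec (m := i) (by omega) hi
  have hmem : (j - i') ∈ {d : ℕ | 0 < d ∧ ∃ i : ℕ, i + d ≤ n ∧
      (i = 0 ∨ θ i ≠ θ (i + 1)) ∧
      (i + d = n ∨ θ (i + d) ≠ θ (i + d + 1)) ∧
      ∀ e : ℕ, 0 < e → e < d → θ (i + e) = θ (i + e + 1)} := by
    refine ⟨by omega, i', by omega, hPi', ?_, ?_⟩
    · right
      have h1 : ((i' : ℤ) + (j - i' : ℕ)) = (j : ℤ) := by omega
      rw [h1]; exact hj
    · intro e he hed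
      have hm : ¬ Pp (i' + e) := by
        have hlt : Nat.findGreatest Pp (j - 1) < i' + e := by rw [← hi'def]; omega
        exact Nat.findGreatest_is_greatest hlt (by omega)
      simp only [hPp] at hm
      push_neg at hm
      have h2 := hm.2
      push_cast at h2 ⊢
      exact h2
  have hsinf : linMinSeg n θ ≤ j - i' := Nat.sInf_le hmem
  omega

lemma jump_le (n k : ℕ) (θ : ℤ → ℝ) (hn : 1 ≤ n) (hkL : k ≤ linMinSeg n θ) :
    ∀ j : ℕ, (j = 0 ∨ θ j ≠ θ (j + 1)) → j < n → j + k ≤ n := by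
  classical
  intro j hj hjn
  set Q : ℕ → Prop := fun e => 0 < e ∧ (j + e = n ∨ θ (j + e : ℕ) ≠ θ ((j + e : ℕ) + 1)) with hQ
  have hdec : DecidablePred Q := fun _ => Classical.dec _
  have hQn : Q (n - j) := ⟨by omega, Or.inl (by omega)⟩
  have hne : ∃ e, Q e := ⟨n - j, hQn⟩
  set d := Nat.find hne with hd
  have hQd : Q d := Nat.find_spec hne
  have hdle : d ≤ n - j := Nat.find_min' hne hQn
  have hmem : d ∈ {d : ℕ | 0 < d ∧ ∃ i : ℕ, i + d ≤ n ∧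
      (i = 0 ∨ θ i ≠ θ (i + 1)) ∧
      (i + d = n ∨ θ (i + d) ≠ θ (i + d + 1)) ∧
      ∀ e : ℕ, 0 < e → e < d → θ (i + e) = θ (i + e + 1)} := by
    refine ⟨hQd.1, j, by omega, hj, ?_, ?_⟩
    · rcases hQd.2 with h | h
      · left; exact h
      · right; push_cast at h ⊢; exact h
    · intro e he hed
      have hm : ¬ Q e := Nat.find_min hne hed
      simp only [hQ] at hm
      push_neg at hm
      have h2 := (hm he).2
      push_cast at h2 ⊢
      exact h2
  have hsinf : linMinSeg n θ ≤ d := Nat.sInf_le hmem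
  omega

lemma sq_sum_subsingleton (s : Finset ℕ) (b : ℕ → ℝ)
    (h : ∀ e ∈ s, ∀ e' ∈ s, b e ≠ 0 → b e' ≠ 0 → e = e') :
    (∑ e ∈ s, b e) ^ 2 = ∑ e ∈ s, (b e) ^ 2 := by
  by_cases hex : ∃ e ∈ s, b e ≠ 0
  · obtain ⟨j, hj, hbj⟩ := hex
    have h1 : ∑ e ∈ s, b e = b j :=
      Finset.sum_eq_single_of_mem j hj (fun e he hne => by
        by_contra h0
        exact hne (h e he j hj h0 hbj))
    have h2 : ∑ e ∈ s, (b e) ^ 2 = (b j) ^ 2 :=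
      Finset.sum_eq_single_of_mem j hj (fun e he hne => by
        rcases eq_or_ne (b e) 0 with h0 | h0
        · simp [h0]
        · exact absurd (h e he j hj h0 hbj) hne)
    rw [h1, h2]
  · push_neg at hex
    rw [Finset.sum_eq_zero hex, Finset.sum_eq_zero (fun e he => by rw [hex e he]; ring)]
    ring

lemma sum_sq_diff (n k : ℕ) (θ : ℤ → ℝ) (hn : 2 ≤ n) (hk : 1 ≤ k)
    (hkL : k ≤ linMinSeg n θ) :
    ∑ i ∈ Finset.range (n - k), (θ (i + 1) - θ (i + 1 + k)) ^ 2
      = k * ∑ i ∈ Finset.range (n - 1), (θ (i + 1) - θ (i + 2)) ^ 2 := by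
  classical
  have hkn : k ≤ n := by
    have := jump_le n k θ (by omega) hkL 0 (Or.inl rfl) (by omega)
    omega
  set a : ℕ → ℝ := fun m => θ (m : ℤ) - θ ((m : ℤ) + 1) with ha
  have htel : ∀ i : ℕ, θ ((i : ℤ) + 1) - θ ((i : ℤ) + 1 + (k : ℤ))
      = ∑ e ∈ Finset.range k, a (i + 1 + e) := by
    intro i
    have H : ∀ m : ℕ, θ ((i : ℤ) + 1) - θ ((i : ℤ) + 1 + (m : ℤ))
        = ∑ e ∈ Finset.range m, a (i + 1 + e) := by
      intro m
      induction m with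
      | zero => simp
      | succ m ih =>
        rw [Finset.sum_range_succ, ← ih]
        simp only [ha]
        push_cast
        ring_nf
    exact H k
  have hwin : ∀ i ∈ Finset.range (n - k),
      (θ ((i : ℤ) + 1) - θ ((i : ℤ) + 1 + (k : ℤ))) ^ 2
        = ∑ e ∈ Finset.range k, (a (i + 1 + e)) ^ 2 := by
    intro i hi
    rw [Finset.mem_range] at hi
    rw [htel i]
    refine sq_sum_subsingleton _ _ ?_
    intro e he e' he' hbe hbe'
    rw [Finset.mem_range] at he he'
    by_contra hne
    have key : ∀ p q : ℕ, p < q → q < k → a (i + 1 + p) ≠ 0 → a (i + 1 + q) ≠ 0 → False := by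
      intro p q hpq hqk hap haq
      have hjp : θ ((i + 1 + p : ℕ) : ℤ) ≠ θ (((i + 1 + p : ℕ) : ℤ) + 1) := by
        simpa [ha, sub_ne_zero] using hap
      have hjq : θ ((i + 1 + q : ℕ) : ℤ) ≠ θ (((i + 1 + q : ℕ) : ℤ) + 1) := by
        simpa [ha, sub_ne_zero] using haq
      have := jump_ge n k θ hkL (i + 1 + p) (i + 1 + q) (by omega) (by omega) (Or.inr hjp) hjq
      omega
    rcases Nat.lt_or_ge e e' with h | h
    · exact key e e' h he' hbe hbe'
    · exact key e' e (by omega) he hbe' hbe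
  have hq : ∀ j : ℕ, j < n - 1 → (a (j + 1)) ^ 2 ≠ 0 → k ≤ j + 1 ∧ j + 1 + k ≤ n := by
    intro j hj haj
    have ha0 : a (j + 1) ≠ 0 := by
      intro h0; exact haj (by rw [h0]; ring)
    have hjump : θ ((j + 1 : ℕ) : ℤ) ≠ θ (((j + 1 : ℕ) : ℤ) + 1) := by
      simpa [ha, sub_ne_zero] using ha0
    constructor
    · have := jump_ge n k θ hkL 0 (j + 1) (by omega) (by omega) (Or.inl rfl) hjump
      omega
    · exact jump_le n k θ (by omega) hkL (j + 1) (Or.inr hjump) (by omega)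
  calc ∑ i ∈ Finset.range (n - k), (θ ((i : ℤ) + 1) - θ ((i : ℤ) + 1 + (k : ℤ))) ^ 2
      = ∑ i ∈ Finset.range (n - k), ∑ e ∈ Finset.range k, (a (i + 1 + e)) ^ 2 :=
        Finset.sum_congr rfl hwin
    _ = ∑ i ∈ Finset.range (n - k), ∑ j ∈ Finset.range (n - 1),
          (if i ≤ j ∧ j < i + k then (a (j + 1)) ^ 2 else 0) := by
        refine Finset.sum_congr rfl fun i hi => ?_
        rw [Finset.mem_range] at hi
        rw [← Finset.sum_filter]
        have hfe : Finset.filter (fun j => i ≤ j ∧ j < i + k) (Finset.range (n - 1))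
            = Finset.Ico i (i + k) := by
          ext j
          simp only [Finset.mem_filter, Finset.mem_range, Finset.mem_Ico]
          omega
        rw [hfe, Finset.sum_Ico_eq_sum_range]
        rw [show i + k - i = k from by omega]
        refine Finset.sum_congr rfl fun e he => ?_
        rw [show i + e + 1 = i + 1 + e from by omega]
    _ = ∑ j ∈ Finset.range (n - 1), ∑ i ∈ Finset.range (n - k),
          (if i ≤ j ∧ j < i + k then (a (j + 1)) ^ 2 else 0) := Finset.sum_comm
    _ = ∑ j ∈ Finset.range (n - 1), (k : ℝ) * (a (j + 1)) ^ 2 := by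
        refine Finset.sum_congr rfl fun j hj => ?_
        rw [Finset.mem_range] at hj
        rcases eq_or_ne ((a (j + 1)) ^ 2) 0 with h0 | h0
        · simp [h0]
        · obtain ⟨hk1, hk2⟩ := hq j hj h0
          rw [← Finset.sum_filter]
          have hfe : Finset.filter (fun i => i ≤ j ∧ j < i + k) (Finset.range (n - k))
              = Finset.Ico (j + 1 - k) (j + 1) := by
            ext i
            simp only [Finset.mem_filter, Finset.mem_range, Finset.mem_Ico]
            omega
          rw [hfe, Finset.sum_const, Nat.card_Ico]
          rw [show j + 1 - (j + 1 - k) = k from by omega]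
          simp [nsmul_eq_mul]
    _ = k * ∑ j ∈ Finset.range (n - 1), (a (j + 1)) ^ 2 := by rw [Finset.mul_sum]
    _ = k * ∑ i ∈ Finset.range (n - 1), (θ ((i : ℤ) + 1) - θ ((i : ℤ) + 2)) ^ 2 := by
        congr 1

lemma integral_sq_term {Ω : Type*} [MeasurableSpace Ω] (P : Measure Ω) [IsProbabilityMeasure P]
    (f g : Ω → ℝ) (c1 c2 σ : ℝ)
    (hf : MemLp f 2 P) (hg : MemLp g 2 P)
    (hfg : IndepFun f g P)
    (hf0 : ∫ ω, f ω ∂P = 0) (hg0 : ∫ ω, g ω ∂P = 0)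
    (hf2 : ∫ ω, (f ω) ^ 2 ∂P = σ ^ 2) (hg2 : ∫ ω, (g ω) ^ 2 ∂P = σ ^ 2) :
    ∫ ω, ((c1 + f ω) - (c2 + g ω)) ^ 2 ∂P = (c1 - c2) ^ 2 + 2 * σ ^ 2 := by
  have hfi : Integrable f P := hf.integrable one_le_two
  have hgi : Integrable g P := hg.integrable one_le_two
  have hf2i : Integrable (fun ω => f ω ^ 2) P := hf.integrable_sq
  have hg2i : Integrable (fun ω => g ω ^ 2) P := hg.integrable_sq
  have hfgi : Integrable (fun ω => f ω * g ω) P := hfg.integrable_mul hfi hgi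
  have hfg0 : ∫ ω, f ω * g ω ∂P = 0 := by
    have h : ∫ ω, f ω * g ω ∂P = (∫ ω, f ω ∂P) * ∫ ω, g ω ∂P :=
      hfg.integral_fun_mul_eq_mul_integral hfi.aestronglyMeasurable hgi.aestronglyMeasurable
    rw [h, hf0, hg0]; ring
  have hrw : (fun ω => ((c1 + f ω) - (c2 + g ω)) ^ 2)
      = fun ω => (c1 - c2) ^ 2 + ((2 * (c1 - c2)) * f ω
          + ((-(2 * (c1 - c2))) * g ω + (f ω ^ 2 + ((-2) * (f ω * g ω) + g ω ^ 2)))) := by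
    funext ω; ring
  have h4 : Integrable (fun ω => (-2 : ℝ) * (f ω * g ω) + g ω ^ 2) P :=
    (hfgi.const_mul _).add hg2i
  have h3 : Integrable (fun ω => f ω ^ 2 + ((-2 : ℝ) * (f ω * g ω) + g ω ^ 2)) P := hf2i.add h4
  have h2 : Integrable (fun ω => (-(2 * (c1 - c2))) * g ω
      + (f ω ^ 2 + ((-2 : ℝ) * (f ω * g ω) + g ω ^ 2))) P := (hgi.const_mul _).add h3
  have h1 : Integrable (fun ω => (2 * (c1 - c2)) * f ω + ((-(2 * (c1 - c2))) * g ω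
      + (f ω ^ 2 + ((-2 : ℝ) * (f ω * g ω) + g ω ^ 2)))) P := (hfi.const_mul _).add h2
  rw [hrw, integral_add (integrable_const _) h1, integral_add (hfi.const_mul _) h2,
    integral_add (hgi.const_mul _) h3, integral_add hf2i h4,
    integral_add (hfgi.const_mul _) hg2i,
    integral_const, integral_const_mul, integral_const_mul, integral_const_mul,
    hf0, hg0, hf2, hg2, hfg0]
  simp
  ring

theorem expectation_Sstat
    (n : ℕ) (hn : 2 ≤ n)
    (θ : ℤ → ℝ) (hθper : ∀ i : ℤ, θ (i + n) = θ i)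
    {Ω : Type*} [MeasurableSpace Ω] (P : Measure Ω) [IsProbabilityMeasure P]
    (ε : ℤ → Ω → ℝ) (hεper : ∀ (i : ℤ) (ω : Ω), ε (i + n) ω = ε i ω)
    (hmeas : ∀ i : ℤ, Measurable (ε i))
    (hindep : iIndepFun (fun i : Fin n => ε ((i : ℕ) + 1)) P)
    (hident : ∀ i : Fin n, IdentDistrib (ε ((i : ℕ) + 1)) (ε 1) P P)
    (σ κ₄ : ℝ) (hσ : 0 < σ)
    (hL4 : MemLp (ε 1) 4 P)
    (hmean : ∫ ω, ε 1 ω ∂P = 0)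
    (hvar : ∫ ω, (ε 1 ω) ^ 2 ∂P = σ ^ 2)
    (hκ : ∫ ω, (ε 1 ω) ^ 4 ∂P = κ₄ * σ ^ 4)
    (k : ℕ) (hk : 1 ≤ k) (hkL : k ≤ linMinSeg n θ) :
    ∫ ω, Sstat n θ ε k ω ∂P
      = 2 * n * σ ^ 2
        + k * ((∑ i ∈ Finset.range (n - 1), (θ (i + 1) - θ (i + 2)) ^ 2) - 2 * σ ^ 2) := by
  classical
  have hkn : k ≤ n := by
    have := jump_le n k θ (by omega) hkL 0 (Or.inl rfl) (by omega)
    omega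
  have hid : ∀ m : ℕ, 1 ≤ m → m ≤ n → IdentDistrib (ε (m : ℤ)) (ε 1) P P := by
    intro m h1 h2
    have h : IdentDistrib (ε (((m - 1 : ℕ) : ℤ) + 1)) (ε 1) P P := hident ⟨m - 1, by omega⟩
    have hc : ((m - 1 : ℕ) : ℤ) + 1 = (m : ℤ) := by omega
    rwa [hc] at h
  have hmem2 : ∀ m : ℕ, 1 ≤ m → m ≤ n → MemLp (ε (m : ℤ)) 2 P := fun m h1 h2 =>
    ((hid m h1 h2).symm.memLp_snd hL4).mono_exponent (by norm_num)
  have hmean' : ∀ m : ℕ, 1 ≤ m → m ≤ n → ∫ ω, ε (m : ℤ) ω ∂P = 0 := by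
    intro m h1 h2
    rw [(hid m h1 h2).integral_eq]; exact hmean
  have hvar' : ∀ m : ℕ, 1 ≤ m → m ≤ n → ∫ ω, (ε (m : ℤ) ω) ^ 2 ∂P = σ ^ 2 := by
    intro m h1 h2
    have hc : IdentDistrib (fun ω => (ε (m : ℤ) ω) ^ 2) (fun ω => (ε 1 ω) ^ 2) P P :=
      (hid m h1 h2).comp (measurable_id.pow_const 2)
    rw [hc.integral_eq]; exact hvar
  have hindep' : ∀ i : ℕ, i < n - k →
      IndepFun (ε ((i : ℤ) + 1)) (ε ((i : ℤ) + 1 + (k : ℤ))) P := by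
    intro i hi
    have h := hindep.indepFun (i := ⟨i, by omega⟩) (j := ⟨i + k, by omega⟩)
      (by simp only [ne_eq, Fin.mk.injEq]; omega)
    have h2 : IndepFun (ε (((i : ℕ) : ℤ) + 1)) (ε (((i + k : ℕ) : ℤ) + 1)) P := h
    have hc : ((i + k : ℕ) : ℤ) + 1 = (i : ℤ) + 1 + (k : ℤ) := by omega
    rwa [hc] at h2
  have hcast1 : ∀ i : ℕ, ((i + 1 : ℕ) : ℤ) = (i : ℤ) + 1 := by intro i; omega
  have hcast2 : ∀ i : ℕ, ((i + 1 + k : ℕ) : ℤ) = (i : ℤ) + 1 + (k : ℤ) := by intro i; omega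
  have hfL2 : ∀ i : ℕ, i < n - k → MemLp (ε ((i : ℤ) + 1)) 2 P := by
    intro i hi
    have h := hmem2 (i + 1) (by omega) (by omega)
    rwa [hcast1 i] at h
  have hgL2 : ∀ i : ℕ, i < n - k → MemLp (ε ((i : ℤ) + 1 + (k : ℤ))) 2 P := by
    intro i hi
    have h := hmem2 (i + 1 + k) (by omega) (by omega)
    rwa [hcast2 i] at h
  have hintg : ∀ i : ℕ, i < n - k →
      Integrable (fun ω => ((θ ((i : ℤ) + 1) + ε ((i : ℤ) + 1) ω)
        - (θ ((i : ℤ) + 1 + (k : ℤ)) + ε ((i : ℤ) + 1 + (k : ℤ)) ω)) ^ 2) P := by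
    intro i hi
    have hs : MemLp (fun ω => (θ ((i : ℤ) + 1) + ε ((i : ℤ) + 1) ω)
        - (θ ((i : ℤ) + 1 + (k : ℤ)) + ε ((i : ℤ) + 1 + (k : ℤ)) ω)) 2 P :=
      by
        have h := ((memLp_const (μ := P) (p := 2) (θ ((i : ℤ) + 1))).add (hfL2 i hi)).sub
          ((memLp_const (μ := P) (p := 2) (θ ((i : ℤ) + 1 + (k : ℤ)))).add (hgL2 i hi))
        exact h
    exact hs.integrable_sq
  have hterm : ∀ i ∈ Finset.range (n - k),
      ∫ ω, ((θ ((i : ℤ) + 1) + ε ((i : ℤ) + 1) ω)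
          - (θ ((i : ℤ) + 1 + (k : ℤ)) + ε ((i : ℤ) + 1 + (k : ℤ)) ω)) ^ 2 ∂P
        = (θ ((i : ℤ) + 1) - θ ((i : ℤ) + 1 + (k : ℤ))) ^ 2 + 2 * σ ^ 2 := by
    intro i hi
    rw [Finset.mem_range] at hi
    refine integral_sq_term P _ _ _ _ σ (hfL2 i hi) (hgL2 i hi) (hindep' i hi) ?_ ?_ ?_ ?_
    · have h := hmean' (i + 1) (by omega) (by omega)
      rwa [hcast1 i] at h
    · have h := hmean' (i + 1 + k) (by omega) (by omega)
      rwa [hcast2 i] at h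
    · have h := hvar' (i + 1) (by omega) (by omega)
      rwa [hcast1 i] at h
    · have h := hvar' (i + 1 + k) (by omega) (by omega)
      rwa [hcast2 i] at h
  simp only [Sstat]
  rw [integral_finset_sum _ (fun i hi => hintg i (Finset.mem_range.mp hi))]
  rw [Finset.sum_congr rfl hterm]
  rw [Finset.sum_add_distrib, Finset.sum_const, Finset.card_range,
    sum_sq_diff n k θ hn hk hkL, nsmul_eq_mul]
  rw [Nat.cast_sub hkn]
  ring
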